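/- Let N ≥ 1, let k be a natural number with 1 ≤ k ≤ N, and let 0 < ε ≤ 1. Let S ⊆ {1,…,N} with 1 ≤ |S| ≤ k, and let z_1,…,z_N be real numbers with z_i = ε for all i ∉ S, ε ≤ z_i ≤ 1 for all i ∈ S, Σ_{i∈S} z_i ≥ 1 + (|S|−1)ε, and Σ_{i∈S} z_i² ≥ 1 + (|S|−1)ε². Then the empirical variance v satisfies [N(1 − ε² + 2kε² − 2kε) − k²(1 + ε² − 2ε)]/N² ≤ v ≤ [N(k − kε² + 2ε² − 2ε) − 1 − ε² + 2ε]/N². (Paper's Proposition 2, proof step: variance bounds under [1,k]-sparsity with non-negligible ε.) -/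

import Mathlib

set_option maxHeartbeats 1000000 in
private lemma sf_aux (n kk c ε A B v : ℝ)
    (hn : 1 ≤ n) (hc1 : 1 ≤ c) (hck : c ≤ kk) (hkn : kk ≤ n)
    (hε0 : 0 < ε) (hε1 : ε ≤ 1)
    (hAlb : 1 + (c - 1) * ε ≤ A) (hAub : A ≤ c)
    (hBlb : 1 + (c - 1) * ε ^ 2 ≤ B) (hBub : B ≤ c)
    (hv : v = (B + (n - c) * ε ^ 2) / n - ((A + (n - c) * ε) / n) ^ 2) :
    (n * (1 - ε ^ 2 + 2 * kk * ε ^ 2 - 2 * kk * ε) -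
        kk ^ 2 * (1 + ε ^ 2 - 2 * ε)) / n ^ 2 ≤ v ∧
      v ≤ (n * (kk - kk * ε ^ 2 + 2 * ε ^ 2 - 2 * ε) - 1 - ε ^ 2 + 2 * ε) / n ^ 2 := by
  have hn0 : (0:ℝ) < n := by linarith
  have hn2 : (0:ℝ) < n ^ 2 := by positivity
  set T := A + (n - c) * ε with hT
  set Q := B + (n - c) * ε ^ 2 with hQ
  have hveq : v = (n * Q - T ^ 2) / n ^ 2 := by
    rw [hv]; field_simp
  have hε2 : ε ^ 2 ≤ 1 := by nlinarith
  have hnc : (0:ℝ) ≤ n - c := by linarith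
  have hkc : (0:ℝ) ≤ (kk - c) * (1 - ε) := mul_nonneg (by linarith) (by linarith)
  have hkc2 : (0:ℝ) ≤ (kk - c) * (1 - ε ^ 2) := mul_nonneg (by linarith) (by linarith)
  have hncε : (0:ℝ) ≤ (n - c) * ε := mul_nonneg hnc hε0.le
  have hncε2 : (0:ℝ) ≤ (n - c) * ε ^ 2 := mul_nonneg hnc (sq_nonneg ε)
  have hT0 : 0 ≤ T := by rw [hT]; nlinarith
  have hTub : T ≤ kk + (n - kk) * ε := by rw [hT]; nlinarith
  have hTlb : 1 + (n - 1) * ε ≤ T := by rw [hT]; nlinarith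
  have hQub : Q ≤ kk + (n - kk) * ε ^ 2 := by rw [hQ]; nlinarith
  have hQlb : 1 + (n - 1) * ε ^ 2 ≤ Q := by rw [hQ]; nlinarith
  constructor
  · rw [hveq, div_le_div_iff₀ hn2 hn2]
    nlinarith [mul_self_le_mul_self hT0 hTub, mul_le_mul_of_nonneg_left hQlb hn0.le]
  · rw [hveq, div_le_div_iff₀ hn2 hn2]
    have h1 : (0:ℝ) ≤ 1 + (n - 1) * ε := by nlinarith
    nlinarith [mul_self_le_mul_self h1 hTlb, mul_le_mul_of_nonneg_left hQub hn0.le]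

/-- Paper's Proposition 2, proof step: variance bounds under [1,k]-sparsity with
non-negligible ε, where inactive features take the value ε. -/
theorem sf_feature_variance_bounds_sparse_eps
    (N k : ℕ) (hN : 1 ≤ N) (hk1 : 1 ≤ k) (hkN : k ≤ N)
    (ε : ℝ) (hε0 : 0 < ε) (hε1 : ε ≤ 1)
    (S : Finset (Fin N)) (hS1 : 1 ≤ S.card) (hSk : S.card ≤ k)
    (z : Fin N → ℝ)
    (hout : ∀ i ∉ S, z i = ε)
    (hin : ∀ i ∈ S, ε ≤ z i ∧ z i ≤ 1)
    (hsum : 1 + ((S.card : ℝ) - 1) * ε ≤ ∑ i ∈ S, z i)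
    (hsumsq : 1 + ((S.card : ℝ) - 1) * ε ^ 2 ≤ ∑ i ∈ S, (z i) ^ 2)
    (m s v : ℝ)
    (hm : m = (∑ i, z i) / N)
    (hs : s = (∑ i, (z i) ^ 2) / N)
    (hv : v = s - m ^ 2) :
    ((N : ℝ) * (1 - ε ^ 2 + 2 * k * ε ^ 2 - 2 * k * ε) -
        (k : ℝ) ^ 2 * (1 + ε ^ 2 - 2 * ε)) / (N : ℝ) ^ 2 ≤ v ∧
      v ≤ ((N : ℝ) * ((k : ℝ) - k * ε ^ 2 + 2 * ε ^ 2 - 2 * ε) -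
        1 - ε ^ 2 + 2 * ε) / (N : ℝ) ^ 2 := by
  have hcN : S.card ≤ N := le_trans hSk hkN
  have hn : (1:ℝ) ≤ N := by exact_mod_cast hN
  have hc1 : (1:ℝ) ≤ S.card := by exact_mod_cast hS1
  have hck : (S.card : ℝ) ≤ k := by exact_mod_cast hSk
  have hkn : (k : ℝ) ≤ N := by exact_mod_cast hkN
  have hcard : ((Sᶜ.card : ℕ) : ℝ) = (N : ℝ) - S.card := by
    rw [Finset.card_compl, Fintype.card_fin, Nat.cast_sub hcN]
  have hTA : ∑ i, z i = (∑ i ∈ S, z i) + ((N:ℝ) - S.card) * ε := by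
    rw [← Finset.sum_add_sum_compl S z]
    congr 1
    rw [Finset.sum_congr rfl (fun i hi => hout i (Finset.mem_compl.mp hi)),
      Finset.sum_const, nsmul_eq_mul, hcard]
  have hTB : ∑ i, (z i) ^ 2 = (∑ i ∈ S, (z i) ^ 2) + ((N:ℝ) - S.card) * ε ^ 2 := by
    rw [← Finset.sum_add_sum_compl S (fun i => (z i) ^ 2)]
    congr 1
    rw [Finset.sum_congr rfl (fun i hi => by rw [hout i (Finset.mem_compl.mp hi)]),
      Finset.sum_const, nsmul_eq_mul, hcard]
  have hAub : (∑ i ∈ S, z i) ≤ S.card := by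
    calc (∑ i ∈ S, z i) ≤ ∑ _i ∈ S, (1:ℝ) := Finset.sum_le_sum (fun i hi => (hin i hi).2)
    _ = S.card := by simp
  have hBub : (∑ i ∈ S, (z i) ^ 2) ≤ S.card := by
    calc (∑ i ∈ S, (z i) ^ 2) ≤ ∑ _i ∈ S, (1:ℝ) := Finset.sum_le_sum (fun i hi => by
        nlinarith [(hin i hi).1, (hin i hi).2, hε0.le])
    _ = S.card := by simp
  exact sf_aux (N:ℝ) (k:ℝ) (S.card:ℝ) ε (∑ i ∈ S, z i) (∑ i ∈ S, (z i) ^ 2) v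
    hn hc1 hck hkn hε0 hε1 hsum hAub hsumsq hBub
    (by rw [hv, hs, hm, hTA, hTB])
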